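/- Let q ≥ 2 be an integer, x an irrational real number, and let 𝒪 be the closure in ℝ/ℤ of the forward orbit {qⁿ x mod 1 : n ∈ ℕ}. Then for every n ∈ ℕ, the difference set 𝒪 − 𝒪 contains a point of the form ℓ_n/q^n with ℓ_n ∈ {1, …, qⁿ − 1}. -/

import Mathlib

open Pointwise Filter Topology

namespace OrbitDiffAux

noncomputable def Y (q : ℕ) (x : ℝ) (t : ℕ) : ℝ := Int.fract ((q : ℝ) ^ t * x)

noncomputable def B (q : ℕ) (x : ℝ) (n t : ℕ) : ℤ := ⌊(q : ℝ) ^ n * Y q x t⌋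

lemma Y_nonneg (q : ℕ) (x : ℝ) (t : ℕ) : 0 ≤ Y q x t := Int.fract_nonneg _

lemma Y_lt_one (q : ℕ) (x : ℝ) (t : ℕ) : Y q x t < 1 := Int.fract_lt_one _

lemma Y_rec (q : ℕ) (x : ℝ) (n t : ℕ) :
    Y q x (t + n) = (q : ℝ) ^ n * Y q x t - B q x n t := by
  have h1 : (q : ℝ) ^ (t + n) * x
      = (q : ℝ) ^ n * Y q x t + (((q : ℤ) ^ n * ⌊(q : ℝ) ^ t * x⌋ : ℤ) : ℝ) := by
    have h := Int.fract_add_floor ((q : ℝ) ^ t * x)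
    unfold Y
    push_cast
    rw [pow_add]
    linear_combination (-((q : ℝ) ^ n)) * h
  unfold Y B
  rw [h1, Int.fract_add_intCast]
  rfl

lemma B_nonneg (q : ℕ) (x : ℝ) (n t : ℕ) : 0 ≤ B q x n t := by
  exact Int.floor_nonneg.mpr (mul_nonneg (by positivity) (Y_nonneg q x t))

lemma B_lt (q : ℕ) (x : ℝ) (n t : ℕ) (hq : 1 ≤ q) : B q x n t < (q : ℤ) ^ n := by
  have h : (q : ℝ) ^ n * Y q x t < (((q : ℤ) ^ n : ℤ) : ℝ) := by
    push_cast
    nlinarith [Y_lt_one q x t, Y_nonneg q x t, (by positivity : (0:ℝ) < (q:ℝ) ^ n)]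
  exact Int.floor_lt.mpr h

lemma Y_inj (q : ℕ) (hq : 2 ≤ q) (x : ℝ) (hx : Irrational x) {t s : ℕ} (h : t ≠ s) :
    Y q x t ≠ Y q x s := by
  intro he
  unfold Y at he
  rw [Int.fract_eq_fract] at he
  obtain ⟨z, hz⟩ := he
  have hqt : (q : ℝ) ^ t ≠ (q : ℝ) ^ s := by
    intro hh
    apply h
    apply Nat.pow_right_injective hq
    have : ((q ^ t : ℕ) : ℝ) = ((q ^ s : ℕ) : ℝ) := by push_cast; exact hh
    exact_mod_cast this
  have hne : (q : ℝ) ^ t - (q : ℝ) ^ s ≠ 0 := sub_ne_zero.mpr hqt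
  have hx' : x = (z : ℝ) / ((q : ℝ) ^ t - (q : ℝ) ^ s) := by
    field_simp
    nlinarith [hz]
  apply hx
  refine ⟨(z : ℚ) / ((q : ℚ) ^ t - (q : ℚ) ^ s), ?_⟩
  rw [hx']
  push_cast
  ring

lemma coeY (q : ℕ) (x : ℝ) (t : ℕ) :
    ((Y q x t : ℝ) : UnitAddCircle) = q ^ t • (x : UnitAddCircle) := by
  have h1 : Y q x t = (q ^ t : ℕ) • x - ((⌊(q : ℝ) ^ t * x⌋ : ℤ) : ℝ) := by
    unfold Y
    rw [Int.fract]
    push_cast [nsmul_eq_mul]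
    ring
  rw [h1]
  have h2 : (((⌊(q : ℝ) ^ t * x⌋ : ℤ) : ℝ) : UnitAddCircle) = 0 := by
    rw [AddCircle.coe_eq_zero_iff]
    exact ⟨⌊(q : ℝ) ^ t * x⌋, by simp⟩
  have h3 : (((q ^ t : ℕ) • x - ((⌊(q : ℝ) ^ t * x⌋ : ℤ) : ℝ) : ℝ) : UnitAddCircle)
      = (((q ^ t : ℕ) • x : ℝ) : UnitAddCircle) - (((⌊(q : ℝ) ^ t * x⌋ : ℤ) : ℝ) : UnitAddCircle) := rfl
  rw [h3, h2, sub_zero, AddCircle.coe_nsmul]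

end OrbitDiffAux

open OrbitDiffAux

/-- For an irrational `x`, the difference set of the closure `𝒪` of the
`T_q`-forward orbit of `x` in `ℝ/ℤ` contains, for every `n ≥ 1`, a rational
point `ℓₙ / qⁿ` with `ℓₙ ∈ {1, …, qⁿ - 1}`. -/
theorem rational_points_in_difference_of_orbit_closure
    (q : ℕ) (hq : 2 ≤ q) (x : ℝ) (hx : Irrational x) :
    ∀ n : ℕ, 1 ≤ n → ∃ ℓ : ℕ, 1 ≤ ℓ ∧ ℓ ≤ q ^ n - 1 ∧
      ((((ℓ : ℝ) / (q : ℝ) ^ n : ℝ) : UnitAddCircle) ∈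
        closure {y : UnitAddCircle | ∃ m : ℕ, y = q ^ m • (x : UnitAddCircle)} -
        closure {y : UnitAddCircle | ∃ m : ℕ, y = q ^ m • (x : UnitAddCircle)}) := by
  intro n hn
  set S : Set UnitAddCircle := {y : UnitAddCircle | ∃ m : ℕ, y = q ^ m • (x : UnitAddCircle)}
    with hS
  have hq1 : (1 : ℝ) < (q : ℝ) := by exact_mod_cast (by omega : 1 < q)
  have hqn1 : (1 : ℝ) ≤ (q : ℝ) ^ n := one_le_pow₀ hq1.le
  have hqn0 : (0 : ℝ) < (q : ℝ) ^ n := by positivity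
  -- the difference set is closed
  have hDclosed : IsClosed (closure S - closure S) := by
    have hc : IsCompact (closure S - closure S) := by
      rw [← Set.image2_sub, ← Set.image_prod]
      exact ((isClosed_closure.isCompact).prod isClosed_closure.isCompact).image
        (continuous_fst.sub continuous_snd)
    exact hc.isClosed
  by_cases H : ∀ ε > (0:ℝ), ∃ t s : ℕ,
      B q x n t ≠ B q x n s ∧ |Y q x (t + n) - Y q x (s + n)| < ε
  · -- Case 1: blocks with different digits have arbitrarily close futures
    choose t s hb hclose using fun m : ℕ => H (1 / (m + 1)) (by positivity)
    set d : ℕ → ℤ := fun m => B q x n (t m) - B q x n (s m) with hd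
    have hd0 : ∀ m, d m ≠ 0 := fun m => sub_ne_zero.mpr (hb m)
    have hdmem : ∀ m, d m ∈ Finset.Icc (-((q:ℤ) ^ n - 1)) ((q:ℤ) ^ n - 1) := by
      intro m
      have h1 := B_nonneg q x n (t m)
      have h2 := B_nonneg q x n (s m)
      have h3 := B_lt q x n (t m) (by omega)
      have h4 := B_lt q x n (s m) (by omega)
      simp only [Finset.mem_Icc, hd]
      omega
    have hfreq : ∃ dd : ℤ, ∃ᶠ m in atTop, d m = dd := by
      by_contra hcon
      push_neg at hcon
      have hall : ∀ᶠ m in atTop,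
          ∀ dd ∈ Finset.Icc (-((q:ℤ) ^ n - 1)) ((q:ℤ) ^ n - 1), d m ≠ dd :=
        (Filter.eventually_all_finset _).mpr fun dd _ => hcon dd
      obtain ⟨m, hm⟩ := hall.exists
      exact hm (d m) (hdmem m) rfl
    obtain ⟨dd, hdd⟩ := hfreq
    obtain ⟨m0, hm0⟩ := hdd.exists
    have hdd0 : dd ≠ 0 := hm0 ▸ hd0 m0
    have hddmem : -((q:ℤ) ^ n - 1) ≤ dd ∧ dd ≤ (q:ℤ) ^ n - 1 := by
      have h := hdmem m0
      simp only [Finset.mem_Icc] at h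
      rw [hm0] at h
      exact h
    set L : Filter ℕ := atTop ⊓ 𝓟 {m | d m = dd} with hL
    haveI hLne : L.NeBot := Filter.frequently_iff_neBot.mp hdd
    -- algebraic identity
    have key : ∀ m, Y q x (t m) - Y q x (s m) - (d m : ℝ) / (q : ℝ) ^ n
        = (Y q x (t m + n) - Y q x (s m + n)) / (q : ℝ) ^ n := by
      intro m
      have h1 := Y_rec q x n (t m)
      have h2 := Y_rec q x n (s m)
      have h3 : Y q x (t m + n) - Y q x (s m + n)
          = (q : ℝ) ^ n * (Y q x (t m) - Y q x (s m)) - (d m : ℝ) := by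
        rw [h1, h2]
        push_cast [hd]
        ring
      rw [h3]
      field_simp
    -- convergence of the real differences along L
    have hten0 : Tendsto (fun m => Y q x (t m) - Y q x (s m) - (dd : ℝ) / (q : ℝ) ^ n)
        L (𝓝 0) := by
      apply squeeze_zero_norm' (a := fun m : ℕ => 1 / (m + 1 : ℝ))
      · have hmem : {m : ℕ | d m = dd} ∈ L := by
          rw [hL]; exact mem_inf_of_right (mem_principal_self _)
        filter_upwards [hmem] with m hm
        have : Y q x (t m) - Y q x (s m) - (dd : ℝ) / (q : ℝ) ^ n
            = (Y q x (t m + n) - Y q x (s m + n)) / (q : ℝ) ^ n := by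
          rw [← hm]; exact key m
        rw [Real.norm_eq_abs, this, abs_div, abs_of_pos hqn0]
        have h1 : |Y q x (t m + n) - Y q x (s m + n)| < 1 / (m + 1 : ℝ) := hclose m
        have h2 : |Y q x (t m + n) - Y q x (s m + n)| / (q : ℝ) ^ n
            ≤ |Y q x (t m + n) - Y q x (s m + n)| := by
          apply div_le_self (abs_nonneg _) hqn1
        linarith
      · exact tendsto_one_div_add_atTop_nhds_zero_nat.mono_left inf_le_left
    have hten : Tendsto (fun m => Y q x (t m) - Y q x (s m)) L
        (𝓝 ((dd : ℝ) / (q : ℝ) ^ n)) := tendsto_sub_nhds_zero_iff.mp hten0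
    -- passing to the circle
    have htenC : Tendsto (fun m => ((Y q x (t m) - Y q x (s m) : ℝ) : UnitAddCircle)) L
        (𝓝 (((dd : ℝ) / (q : ℝ) ^ n : ℝ) : UnitAddCircle)) :=
      ((AddCircle.continuous_mk' (1:ℝ)).tendsto _).comp hten
    have hmemD : (((dd : ℝ) / (q : ℝ) ^ n : ℝ) : UnitAddCircle) ∈ closure S - closure S := by
      refine hDclosed.mem_of_tendsto htenC (Eventually.of_forall fun m => ?_)
      have h1 : ((Y q x (t m) : ℝ) : UnitAddCircle) ∈ closure S :=
        subset_closure ⟨t m, coeY q x (t m)⟩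
      have h2 : ((Y q x (s m) : ℝ) : UnitAddCircle) ∈ closure S :=
        subset_closure ⟨s m, coeY q x (s m)⟩
      exact Set.sub_mem_sub h1 h2
    -- choose ℓ
    have hqn_nat : 1 ≤ q ^ n := Nat.one_le_pow _ _ (by omega)
    rcases lt_or_gt_of_ne hdd0 with hneg | hpos
    · refine ⟨(dd + (q:ℤ) ^ n).toNat, ?_, ?_, ?_⟩
      · omega
      · have : ((q:ℤ) ^ n) = ((q ^ n : ℕ) : ℤ) := by push_cast; ring
        omega
      · have hcast : (((dd + (q:ℤ) ^ n).toNat : ℝ)) = (dd : ℝ) + (q : ℝ) ^ n := by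
          have h1 : ((dd + (q:ℤ) ^ n).toNat : ℤ) = dd + (q:ℤ) ^ n := Int.toNat_of_nonneg (by omega)
          have := congrArg (fun z : ℤ => (z : ℝ)) h1
          push_cast at this
          linarith
        have heq : (((dd + (q:ℤ) ^ n).toNat : ℝ)) / (q : ℝ) ^ n
            = (dd : ℝ) / (q : ℝ) ^ n + 1 := by
          rw [hcast]; field_simp
        rw [heq]
        have : ((((dd : ℝ) / (q : ℝ) ^ n + 1 : ℝ)) : UnitAddCircle)
            = (((dd : ℝ) / (q : ℝ) ^ n : ℝ) : UnitAddCircle) := AddCircle.coe_add_period 1 _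
        rw [this]
        exact hmemD
    · refine ⟨dd.toNat, ?_, ?_, ?_⟩
      · omega
      · have : ((q:ℤ) ^ n) = ((q ^ n : ℕ) : ℤ) := by push_cast; ring
        omega
      · have hcast : ((dd.toNat : ℝ)) = (dd : ℝ) := by
          have h1 : (dd.toNat : ℤ) = dd := Int.toNat_of_nonneg (by omega)
          exact_mod_cast congrArg (fun z : ℤ => (z : ℝ)) h1
        rw [hcast]
        exact hmemD
  · -- Case 2: separation; derive a contradiction
    exfalso
    push_neg at H
    obtain ⟨ε, hε, hsep⟩ := H
    -- backward rigidity
    have key1 : ∀ t s : ℕ, |Y q x (t + n) - Y q x (s + n)| < ε →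
        Y q x (t + n) - Y q x (s + n) = (q : ℝ) ^ n * (Y q x t - Y q x s) := by
      intro t s hlt
      have hB : B q x n t = B q x n s := by
        by_contra hne
        exact absurd hlt (not_lt.mpr (hsep t s hne))
      have h1 := Y_rec q x n t
      have h2 := Y_rec q x n s
      rw [h1, h2, hB]
      ring
    have key2 : ∀ j : ℕ, ∀ t s : ℕ, |Y q x (t + j * n) - Y q x (s + j * n)| < ε →
        Y q x (t + j * n) - Y q x (s + j * n) = ((q : ℝ) ^ n) ^ j * (Y q x t - Y q x s) := by
      intro j
      induction j with
      | zero => intro t s _; simp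
      | succ j ih =>
        intro t s hlt
        have hidx : ∀ u : ℕ, u + (j + 1) * n = (u + j * n) + n := by intro u; ring
        rw [hidx t, hidx s] at hlt ⊢
        have h1 := key1 (t + j * n) (s + j * n) hlt
        have hsm : |Y q x (t + j * n) - Y q x (s + j * n)| < ε := by
          have habs : |Y q x (t + j * n + n) - Y q x (s + j * n + n)|
              = (q : ℝ) ^ n * |Y q x (t + j * n) - Y q x (s + j * n)| := by
            rw [h1, abs_mul, abs_of_pos hqn0]
          nlinarith [abs_nonneg (Y q x (t + j * n) - Y q x (s + j * n)), hlt, habs]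
        have h2 := ih t s hsm
        rw [h1, h2]
        ring
    -- for each pair, eventually separated
    have key3 : ∀ t s : ℕ, ∃ J : ℕ, ∀ j ≥ J, t ≠ s →
        ε ≤ |Y q x (t + j * n) - Y q x (s + j * n)| := by
      intro t s
      by_cases hts : t = s
      · exact ⟨0, fun j _ hne => absurd hts hne⟩
      · have hc : 0 < |Y q x t - Y q x s| :=
          abs_pos.mpr (sub_ne_zero.mpr (Y_inj q hq x hx hts))
        obtain ⟨J, hJ⟩ := pow_unbounded_of_one_lt (ε / |Y q x t - Y q x s|)
          (one_lt_pow₀ hq1 (by omega) : (1:ℝ) < (q:ℝ) ^ n)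
        refine ⟨J, fun j hj _ => ?_⟩
        by_contra hlt
        push_neg at hlt
        have heq := key2 j t s hlt
        have hmono : ((q:ℝ) ^ n) ^ J ≤ ((q:ℝ) ^ n) ^ j := pow_le_pow_right₀ hqn1 hj
        have : ε < ((q:ℝ) ^ n) ^ j * |Y q x t - Y q x s| := by
          have h1 : ε / |Y q x t - Y q x s| < ((q:ℝ) ^ n) ^ J := hJ
          have h2 : ε < ((q:ℝ) ^ n) ^ J * |Y q x t - Y q x s| := by
            rw [div_lt_iff₀ hc] at h1; linarith
          nlinarith
        rw [heq, abs_mul, abs_of_pos (by positivity : (0:ℝ) < ((q:ℝ)^n)^j)] at hlt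
        linarith
      -- choose uniform J on a finite range
    choose J0 hJ0 using key3
    set M : ℤ := ⌊1 / ε⌋ with hM
    have hM0 : 0 ≤ M := Int.floor_nonneg.mpr (by positivity)
    set R : ℕ := M.toNat + 1 with hR
    set P : Finset (ℕ × ℕ) := Finset.range (R + 1) ×ˢ Finset.range (R + 1) with hP
    set J : ℕ := P.sup (fun p => J0 p.1 p.2) with hJdef
    set z : ℕ → ℝ := fun r => Y q x (r + J * n) with hz
    set g : ℕ → ℤ := fun r => ⌊z r / ε⌋ with hg
    have hsepz : ∀ r ∈ Finset.range (R + 1), ∀ r' ∈ Finset.range (R + 1), r ≠ r' →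
        ε ≤ |z r - z r'| := by
      intro r hr r' hr' hne
      have hJle : J0 r r' ≤ J := by
        rw [hJdef]
        exact Finset.le_sup (f := fun p : ℕ × ℕ => J0 p.1 p.2)
          (show ((r, r') : ℕ × ℕ) ∈ P by rw [hP]; exact Finset.mem_product.mpr ⟨hr, hr'⟩)
      exact hJ0 r r' J hJle hne
    have hinj : Set.InjOn g (Finset.range (R + 1) : Set ℕ) := by
      intro r hr r' hr' hgeq
      by_contra hne
      have hsep' := hsepz r (by simpa using hr) r' (by simpa using hr') hne
      have h1 : z r / ε < g r + 1 := Int.lt_floor_add_one _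
      have h2 : (g r : ℝ) ≤ z r / ε := Int.floor_le _
      have h3 : z r' / ε < g r' + 1 := Int.lt_floor_add_one _
      have h4 : (g r' : ℝ) ≤ z r' / ε := Int.floor_le _
      rw [hgeq] at h1 h2
      have habs : |z r / ε - z r' / ε| < 1 := abs_lt.mpr ⟨by linarith, by linarith⟩
      have : |z r - z r'| < ε := by
        have := mul_lt_mul_of_pos_left habs hε
        rw [mul_one] at this
        have heq0 : z r - z r' = ε * (z r / ε - z r' / ε) := by
          field_simp
        have heq : |z r - z r'| = ε * |z r / ε - z r' / ε| := by
          rw [heq0, abs_mul, abs_of_pos hε]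
        linarith [heq ▸ this]
      linarith
    have hmaps : ∀ r ∈ Finset.range (R + 1), g r ∈ Finset.Icc (0 : ℤ) M := by
      intro r _
      simp only [Finset.mem_Icc, hg]
      constructor
      · exact Int.floor_nonneg.mpr (div_nonneg (Y_nonneg q x _) hε.le)
      · apply Int.floor_le_floor
        exact (div_le_div_iff_of_pos_right hε).mpr (Y_lt_one q x _).le
    have hcard := Finset.card_le_card_of_injOn g hmaps hinj
    rw [Finset.card_range, Int.card_Icc] at hcard
    omega
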